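/- arXiv:math/0310260 — 6 statements merged into one kernel-verified Lean document; each statement's English description precedes it below -/
import Mathlib

section
/- Let A be a commutative ring and let x = (x_1, …, x_n) be an element of the product ring A^n, viewed as an A-algebra via the diagonal morphism A → A^n. Then x generates A^n as an A-algebra (i.e. the A-subalgebra generated by x is all of A^n) if and only if the Vandermonde determinant ∏_{i<j} (x_j − x_i) is invertible in A. -/
universe u

/-- An element `x = (x 1, …, x n)` of the product ring `A^n` (with the diagonal
`A`-algebra structure) generates `A^n` as an `A`-algebra if and only if the
Vandermonde determinant `∏_{i<j} (x j - x i)` is invertible in `A`. -/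
theorem adjoin_eq_top_iff_isUnit_vandermonde {A : Type u} [CommRing A] {n : ℕ}
    (x : Fin n → A) :
    Algebra.adjoin A {x} = ⊤ ↔
      IsUnit (∏ i : Fin n, ∏ j ∈ Finset.univ.filter (fun j => i < j), (x j - x i)) := by
  have hIoi : ∀ i : Fin n, Finset.univ.filter (fun j => i < j) = Finset.Ioi i := by
    intro i; ext j; simp
  have haeval : ∀ (p : Polynomial A) (i : Fin n),
      (Polynomial.aeval x p) i = p.eval (x i) := by
    intro p i
    have := Polynomial.aeval_algHom_apply (Pi.evalAlgHom A (fun _ : Fin n => A) i) x p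
    exact this.symm
  rw [Algebra.adjoin_singleton_eq_range_aeval, AlgHom.range_eq_top]
  constructor
  · intro h
    apply Finset.prod_induction _ IsUnit (fun a b ha hb => ha.mul hb) isUnit_one
    intro i _
    apply Finset.prod_induction _ IsUnit (fun a b ha hb => ha.mul hb) isUnit_one
    intro j hj
    rw [Finset.mem_filter] at hj
    have hij : i < j := hj.2
    obtain ⟨p, hp⟩ := h (Pi.single j 1)
    have h1 : p.eval (x j) = 1 := by
      have := congrFun hp j; rwa [haeval, Pi.single_eq_same] at this
    have h0 : p.eval (x i) = 0 := by
      have := congrFun hp i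
      rwa [haeval, Pi.single_eq_of_ne hij.ne] at this
    have hdvd : x j - x i ∣ (1 : A) := by
      have := Polynomial.sub_dvd_eval_sub (x j) (x i) p
      rwa [h1, h0, sub_zero] at this
    exact isUnit_of_dvd_one hdvd
  · intro h
    have hdet : IsUnit (Matrix.vandermonde x).det := by
      rw [Matrix.det_vandermonde]
      simpa only [hIoi] using h
    intro y
    set M := Matrix.vandermonde x with hM
    set c := M⁻¹.mulVec y with hc
    refine ⟨∑ k : Fin n, Polynomial.C (c k) * Polynomial.X ^ (k : ℕ), ?_⟩
    funext i
    rw [haeval]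
    have : (∑ k : Fin n, Polynomial.C (c k) * Polynomial.X ^ (k : ℕ)).eval (x i)
        = ∑ k : Fin n, x i ^ (k : ℕ) * c k := by
      simp only [Polynomial.eval_finset_sum, Polynomial.eval_mul, Polynomial.eval_C,
        Polynomial.eval_pow, Polynomial.eval_X]
      exact Finset.sum_congr rfl fun k _ => mul_comm _ _
    rw [this]
    have : (M.mulVec c) i = y i := by
      rw [hc, Matrix.mulVec_mulVec, Matrix.mul_nonsing_inv _ hdet, Matrix.one_mulVec]
    simpa [hM, Matrix.mulVec, dotProduct, Matrix.vandermonde, Matrix.vandermonde_apply] using this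
end

section
/- For every commutative ring A and every natural number n, the diagonal A-algebra A^n is locally simple: there exists a faithfully flat commutative A-algebra A' such that A' ⊗_A A^n is generated by a single element as an A'-algebra. (Concretely, one may take A' = A[X_1, …, X_n] localized at the Vandermonde element ∏_{i<j}(X_j − X_i).) -/
set_option maxHeartbeats 1000000

open TensorProduct

universe u

/-- An `A`-algebra `B` is *simple* (monogenic) if it is generated by a single element,
and *locally simple* if there is a faithfully flat commutative `A`-algebra `A'` such that
`A' ⊗[A] B` is a simple `A'`-algebra. -/
def Algebra.IsLocallySimple (A B : Type u) [CommRing A] [CommRing B] [Algebra A B] : Prop :=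
  ∃ (A' : Type u) (_ : CommRing A') (_ : Algebra A A'),
    Module.FaithfullyFlat A A' ∧ ∃ x : A' ⊗[A] B, Algebra.adjoin A' {x} = ⊤

lemma prod_isUnit_finset {R : Type*} [CommMonoid R] {ι : Type*} (s : Finset ι) (f : ι → R)
    (h : ∀ i ∈ s, IsUnit (f i)) : IsUnit (∏ i ∈ s, f i) := by
  induction s using Finset.cons_induction with
  | empty => simp
  | cons a s ha ih =>
    rw [Finset.prod_cons]
    exact (h a (Finset.mem_cons_self _ _)).mul (ih fun i hi => h i (Finset.mem_cons_of_mem hi))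

/-- If `y : Fin n → R` has components with pairwise invertible differences, then it generates
the product algebra `Fin n → R` over `R`. -/
lemma adjoin_pi_singleton_eq_top {R : Type*} [CommRing R] {n : ℕ} (y : Fin n → R)
    (h : ∀ i j, i ≠ j → IsUnit (y i - y j)) :
    Algebra.adjoin R {y} = ⊤ := by
  classical
  have hy : y ∈ Algebra.adjoin R {y} := Algebra.subset_adjoin rfl
  have hsingle : ∀ i, Pi.single i (1 : R) ∈ Algebra.adjoin R {y} := by
    intro i
    have hu : IsUnit (∏ j ∈ Finset.univ.erase i, (y i - y j)) := by
      refine prod_isUnit_finset _ _ fun j hj => h i j ?_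
      exact fun hij => (Finset.mem_erase.mp hj).1 hij.symm
    obtain ⟨u, hu⟩ := hu
    have key : Pi.single i (1 : R) =
        ((u⁻¹ : Rˣ) : R) • ∏ j ∈ Finset.univ.erase i, (y - algebraMap R (Fin n → R) (y j)) := by
      funext k
      have hpk : ((∏ j ∈ Finset.univ.erase i, (y - algebraMap R (Fin n → R) (y j))) k)
          = ∏ j ∈ Finset.univ.erase i, (y k - y j) := by
        rw [Finset.prod_apply]
        rfl
      rw [Pi.smul_apply, hpk, smul_eq_mul]
      by_cases hk : k = i
      · subst hk
        rw [Pi.single_eq_same, ← hu, Units.inv_mul]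
      · rw [Pi.single_eq_of_ne hk,
          Finset.prod_eq_zero (Finset.mem_erase.mpr ⟨hk, Finset.mem_univ k⟩) (by ring),
          mul_zero]
    rw [key]
    exact Subalgebra.smul_mem _ (Subalgebra.prod_mem _ fun j _ =>
      Subalgebra.sub_mem _ hy (Subalgebra.algebraMap_mem _ _)) _
  rw [eq_top_iff]
  intro v _
  have hv : v = ∑ i, algebraMap R (Fin n → R) (v i) * Pi.single i (1 : R) := by
    funext k
    rw [Finset.sum_apply, Finset.sum_eq_single k]
    · simp
    · intro j _ hj
      simp [Pi.single_eq_of_ne (Ne.symm hj)]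
    · simp
  rw [hv]
  exact Subalgebra.sum_mem _ fun i _ =>
    Subalgebra.mul_mem _ (Subalgebra.algebraMap_mem _ _) (hsingle i)

/-- The "Vandermonde" element `∏_{i ≠ j} (X i - X j)` of `A[X_1, …, X_n]`. -/
noncomputable def vand (A : Type u) [CommRing A] (n : ℕ) : MvPolynomial (Fin n) A :=
  ∏ p ∈ (Finset.univ : Finset (Fin n)).offDiag,
    ((MvPolynomial.X p.1 : MvPolynomial (Fin n) A) - MvPolynomial.X p.2)

lemma dvd_vand (A : Type u) [CommRing A] (n : ℕ) {i j : Fin n} (hij : i ≠ j) :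
    (MvPolynomial.X i - MvPolynomial.X j : MvPolynomial (Fin n) A) ∣ vand A n := by
  classical
  unfold vand
  refine Finset.dvd_prod_of_mem (a := (i, j))
    (fun p : Fin n × Fin n => (MvPolynomial.X p.1 : MvPolynomial (Fin n) A) - MvPolynomial.X p.2)
    ?_
  exact Finset.mem_offDiag.mpr ⟨Finset.mem_univ _, Finset.mem_univ _, hij⟩

lemma map_vand_ne_zero {A K : Type u} [CommRing A] [Field K] (g : A →+* K) (n : ℕ) :
    MvPolynomial.map (σ := Fin n) g (vand A n) ≠ 0 := by
  classical
  unfold vand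
  rw [map_prod]
  apply Finset.prod_ne_zero_iff.mpr
  intro p hp
  rw [map_sub, MvPolynomial.map_X, MvPolynomial.map_X]
  exact sub_ne_zero.mpr fun e => (Finset.mem_offDiag.mp hp).2.2 (MvPolynomial.X_injective e)

/-- For every commutative ring `A` and every `n`, the diagonal `A`-algebra `A^n`
is locally simple. -/
theorem isLocallySimple_pi (A : Type u) [CommRing A] (n : ℕ) :
    Algebra.IsLocallySimple A (Fin n → A) := by
  classical
  refine ⟨Localization.Away (vand A n), inferInstance, inferInstance, ?_, ?_⟩
  · have hflat : Module.Flat A (Localization.Away (vand A n)) :=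
      Module.Flat.trans A (MvPolynomial (Fin n) A) (Localization.Away (vand A n))
    refine { toFlat := hflat, submodule_ne_top := ?_ }
    intro m hm htop
    letI : Field (A ⧸ m) := Ideal.Quotient.field m
    have hψ0f : MvPolynomial.map (σ := Fin n) (Ideal.Quotient.mk m) (vand A n) ≠ 0 :=
      map_vand_ne_zero (Ideal.Quotient.mk m) n
    have hunit : IsUnit (((algebraMap (MvPolynomial (Fin n) (A ⧸ m))
        (FractionRing (MvPolynomial (Fin n) (A ⧸ m)))).comp
        (MvPolynomial.map (Ideal.Quotient.mk m))) (vand A n)) := by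
      rw [RingHom.comp_apply, isUnit_iff_ne_zero]
      intro h0
      exact hψ0f ((map_eq_zero_iff _ (IsFractionRing.injective (MvPolynomial (Fin n) (A ⧸ m))
        (FractionRing (MvPolynomial (Fin n) (A ⧸ m))))).mp h0)
    set φ : Localization.Away (vand A n) →+* FractionRing (MvPolynomial (Fin n) (A ⧸ m)) :=
      IsLocalization.Away.lift (vand A n) hunit with hφ
    have hcomp : ∀ a ∈ m, φ (algebraMap A (Localization.Away (vand A n)) a) = 0 := by
      intro a ha
      have h1 : algebraMap A (Localization.Away (vand A n)) a =
          algebraMap (MvPolynomial (Fin n) A) (Localization.Away (vand A n))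
            (MvPolynomial.C a) := by
        rw [IsScalarTower.algebraMap_apply A (MvPolynomial (Fin n) A)
          (Localization.Away (vand A n))]
        rfl
      rw [h1, hφ, IsLocalization.Away.lift_eq (vand A n) hunit, RingHom.comp_apply,
        MvPolynomial.map_C, Ideal.Quotient.eq_zero_iff_mem.mpr ha, map_zero, map_zero]
    have h1 : (1 : Localization.Away (vand A n)) ∈
        m.map (algebraMap A (Localization.Away (vand A n))) := by
      have hsm := Ideal.smul_top_eq_map (S := Localization.Away (vand A n)) m
      rw [htop] at hsm
      have hset : ((m.map (algebraMap A (Localization.Away (vand A n)))).restrictScalars A :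
          Set (Localization.Away (vand A n))) = Set.univ := by
        rw [← hsm]; rfl
      have : (1 : Localization.Away (vand A n)) ∈
          ((m.map (algebraMap A (Localization.Away (vand A n)))).restrictScalars A :
            Set (Localization.Away (vand A n))) := by
        rw [hset]; trivial
      exact this
    have hmap : (m.map (algebraMap A (Localization.Away (vand A n)))).map φ ≤ ⊥ := by
      rw [Ideal.map_map, Ideal.map_le_iff_le_comap]
      intro a ha
      simpa [Ideal.mem_comap] using hcomp a ha
    have hone : (1 : FractionRing (MvPolynomial (Fin n) (A ⧸ m))) = 0 := by
      have := hmap (Ideal.mem_map_of_mem φ h1)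
      simpa using this
    exact one_ne_zero hone
  · -- generator
    set y : Fin n → Localization.Away (vand A n) :=
      fun i => algebraMap (MvPolynomial (Fin n) A) (Localization.Away (vand A n))
        (MvPolynomial.X i) with hy
    have hyu : ∀ i j, i ≠ j → IsUnit (y i - y j) := by
      intro i j hij
      have : y i - y j = algebraMap (MvPolynomial (Fin n) A) (Localization.Away (vand A n))
          (MvPolynomial.X i - MvPolynomial.X j) := by
        rw [map_sub, hy]
      rw [this]
      exact isUnit_of_dvd_unit (map_dvd _ (dvd_vand A n hij))
        (IsLocalization.Away.algebraMap_isUnit _)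
    have hadj : Algebra.adjoin (Localization.Away (vand A n)) {y} = ⊤ :=
      adjoin_pi_singleton_eq_top y hyu
    let e : Localization.Away (vand A n) ⊗[A] (Fin n → A) ≃ₐ[Localization.Away (vand A n)]
        (Fin n → Localization.Away (vand A n)) :=
      (Algebra.TensorProduct.piRight A (Localization.Away (vand A n))
        (Localization.Away (vand A n)) fun _ : Fin n => A).trans
        (AlgEquiv.piCongrRight fun _ =>
          Algebra.TensorProduct.rid A (Localization.Away (vand A n)) (Localization.Away (vand A n)))
    refine ⟨e.symm y, ?_⟩
    have hmap := AlgHom.map_adjoin_singleton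
      (e.symm : (Fin n → Localization.Away (vand A n)) →ₐ[Localization.Away (vand A n)]
        Localization.Away (vand A n) ⊗[A] (Fin n → A)) y
    rw [hadj, Algebra.map_top] at hmap
    rw [show e.symm y = (e.symm : (Fin n → Localization.Away (vand A n))
        →ₐ[Localization.Away (vand A n)] Localization.Away (vand A n) ⊗[A] (Fin n → A)) y from rfl,
      ← hmap]
    exact (AlgHom.range_eq_top _).mpr e.symm.surjective
end

section
/- Let A be a commutative ring and let P(T), Q(T) ∈ A[T] be monic polynomials. Let R(X) ∈ A[X] be the resultant in T of P(T+X) and Q(T), and let A' = A[X]_{R(X)} be the localization of A[X] at the multiplicative set generated by R(X). Then the canonical morphism A → A' is faithfully flat. -/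
universe u

variable {A : Type u} [CommRing A]

/-- The Sylvester matrix of two polynomials `f`, `g` with respect to the sizes `m`, `n`
(intended to be the degrees of `f` and `g` respectively): it is the `(n + m) × (n + m)`
matrix whose first `n` rows carry the successively shifted coefficients of `f` and whose
last `m` rows carry the successively shifted coefficients of `g`. -/
noncomputable def Polynomial.sylvesterMatrix (f g : Polynomial A) (m n : ℕ) :
    Matrix (Fin (n + m)) (Fin (n + m)) A :=
  Matrix.of fun i j =>
    Fin.addCases (motive := fun _ => A)
      (fun i' : Fin n => if (i' : ℕ) ≤ (j : ℕ) then f.coeff ((j : ℕ) - (i' : ℕ)) else 0)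
      (fun i' : Fin m => if (i' : ℕ) ≤ (j : ℕ) then g.coeff ((j : ℕ) - (i' : ℕ)) else 0) i

/-- The resultant of two polynomials `f` and `g`: the determinant of their Sylvester
matrix (formed with respect to their degrees). -/
noncomputable def Polynomial.sylvesterResultant (f g : Polynomial A) : A :=
  (Polynomial.sylvesterMatrix f g f.natDegree g.natDegree).det

namespace ResultantAux

open Polynomial Matrix Finset

variable {B : Type*} [CommRing B]

lemma coeff_prod_eq {ι : Type*} (s : Finset ι) (f : ι → Polynomial B) (d : ι → ℕ)
    (h : ∀ i ∈ s, (f i).natDegree ≤ d i) :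
    (∏ i ∈ s, f i).coeff (∑ i ∈ s, d i) = ∏ i ∈ s, (f i).coeff (d i) := by
  induction s using Finset.cons_induction with
  | empty => simp
  | cons a s ha ih =>
    rw [Finset.prod_cons, Finset.sum_cons,
      Polynomial.coeff_mul_add_eq_of_natDegree_le (h a (Finset.mem_cons_self a s))
        ((Polynomial.natDegree_prod_le _ _).trans
          (Finset.sum_le_sum fun i hi => h i (Finset.mem_cons_of_mem hi))),
      ih fun i hi => h i (Finset.mem_cons_of_mem hi), Finset.prod_cons]

lemma coeff_det {N : ℕ} (M : Matrix (Fin N) (Fin N) (Polynomial B)) (r : Fin N → ℕ) (D : ℕ)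
    (h0 : ∀ (i j : Fin N), r i < (j : ℕ) → M i j = 0)
    (hdeg : ∀ i j, (M i j).natDegree ≤ r i - (j : ℕ))
    (hD : ∑ i, r i = D + ∑ j : Fin N, (j : ℕ)) :
    M.det.coeff D = (Matrix.of fun i j => (M i j).coeff (r i - (j : ℕ))).det := by
  rw [Matrix.det_apply, Matrix.det_apply, Polynomial.finset_sum_coeff]
  refine Finset.sum_congr rfl fun σ _ => ?_
  rw [Polynomial.coeff_smul]
  congr 1
  show (∏ i, M (σ i) i).coeff D = ∏ i, (M (σ i) i).coeff (r (σ i) - (i : ℕ))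
  by_cases hσ : ∀ i : Fin N, (i : ℕ) ≤ r (σ i)
  · have h1 : ∑ i : Fin N, (r (σ i) - (i : ℕ)) + ∑ i : Fin N, (i : ℕ)
        = ∑ i : Fin N, r (σ i) := by
      rw [← Finset.sum_add_distrib]
      exact Finset.sum_congr rfl fun i _ => Nat.sub_add_cancel (hσ i)
    have h2 : ∑ i : Fin N, r (σ i) = ∑ i, r i := Equiv.sum_comp σ r
    have hsum : ∑ i : Fin N, (r (σ i) - (i : ℕ)) = D := by omega
    rw [← hsum, coeff_prod_eq]
    exact fun i _ => hdeg (σ i) i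
  · push_neg at hσ
    obtain ⟨i, hi⟩ := hσ
    have hM : M (σ i) i = 0 := h0 _ _ hi
    rw [show (∏ i : Fin N, M (σ i) i) = 0 from Finset.prod_eq_zero (Finset.mem_univ i) hM,
      show (∏ i : Fin N, (M (σ i) i).coeff (r (σ i) - (i : ℕ))) = 0 from
        Finset.prod_eq_zero (Finset.mem_univ i) (by rw [hM, Polynomial.coeff_zero]),
      Polynomial.coeff_zero]

lemma sylvester_coeff (f g : Polynomial (Polynomial B)) (m n : ℕ)
    (hf0 : ∀ k, m < k → f.coeff k = 0)
    (hfdeg : ∀ k, (f.coeff k).natDegree ≤ m - k)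
    (hftop : ∀ k, k ≤ m → (f.coeff k).coeff (m - k) = (m.choose k : B))
    (hg : ∀ j, ∃ c : B, g.coeff j = Polynomial.C c)
    (hg0 : ∀ j, n < j → g.coeff j = 0)
    (hgn : g.coeff n = 1) :
    ((Polynomial.sylvesterMatrix f g m n).det).coeff (n * m) = 1 := by
  classical
  set M := Polynomial.sylvesterMatrix f g m n with hM
  set r : Fin (n + m) → ℕ :=
    Fin.addCases (motive := fun _ => ℕ) (fun i : Fin n => m + i) (fun i : Fin m => n + i) with hr
  have Mleft : ∀ (i : Fin n) (j : Fin (n + m)),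
      M (Fin.castAdd m i) j = if (i : ℕ) ≤ (j : ℕ) then f.coeff ((j : ℕ) - (i : ℕ)) else 0 := by
    intro i j
    simp [hM, Polynomial.sylvesterMatrix]
  have Mright : ∀ (i : Fin m) (j : Fin (n + m)),
      M (Fin.natAdd n i) j = if (i : ℕ) ≤ (j : ℕ) then g.coeff ((j : ℕ) - (i : ℕ)) else 0 := by
    intro i j
    simp [hM, Polynomial.sylvesterMatrix]
  have rleft : ∀ i : Fin n, r (Fin.castAdd m i) = m + i := fun i => by simp [hr]
  have rright : ∀ i : Fin m, r (Fin.natAdd n i) = n + i := fun i => by simp [hr]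
  have h0 : ∀ (i j : Fin (n + m)), r i < (j : ℕ) → M i j = 0 := by
    refine Fin.addCases ?_ ?_
    · intro i j hj
      rw [rleft] at hj
      rw [Mleft, if_pos (by omega)]
      exact hf0 _ (by omega)
    · intro i j hj
      rw [rright] at hj
      rw [Mright, if_pos (by omega)]
      exact hg0 _ (by omega)
  have hdeg : ∀ i j, (M i j).natDegree ≤ r i - (j : ℕ) := by
    refine Fin.addCases ?_ ?_
    · intro i j
      rw [Mleft, rleft]
      by_cases hij : (i : ℕ) ≤ (j : ℕ)
      · rw [if_pos hij]
        exact (hfdeg _).trans (by omega)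
      · rw [if_neg hij]
        simp
    · intro i j
      rw [Mright, rright]
      by_cases hij : (i : ℕ) ≤ (j : ℕ)
      · rw [if_pos hij]
        obtain ⟨c, hc⟩ := hg ((j : ℕ) - (i : ℕ))
        rw [hc]
        simp
      · rw [if_neg hij]
        simp
  have hD : ∑ i, r i = n * m + ∑ j : Fin (n + m), (j : ℕ) := by
    rw [Fin.sum_univ_add (f := r), Fin.sum_univ_add (f := fun j : Fin (n + m) => (j : ℕ))]
    simp only [rleft, rright, Fin.coe_castAdd, Fin.coe_natAdd]
    rw [Finset.sum_add_distrib, Finset.sum_add_distrib, Finset.sum_const, Finset.sum_const]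
    simp [Finset.card_univ, mul_comm]
    ring
  rw [coeff_det M r (n * m) h0 hdeg hD]
  set Nc : Matrix (Fin (n + m)) (Fin (n + m)) B :=
    Matrix.of fun i j => (M i j).coeff (r i - (j : ℕ)) with hNc
  have htri : Nc.BlockTriangular id := by
    refine Fin.addCases (motive := fun i => ∀ ⦃j⦄, id j < id i → Nc i j = 0) ?_ ?_
    · intro i j hj
      have hj' : (j : ℕ) < (Fin.castAdd m i : ℕ) := hj
      simp only [Fin.coe_castAdd] at hj'
      show (M (Fin.castAdd m i) j).coeff _ = 0
      rw [Mleft, if_neg (by omega)]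
      simp
    · intro i j hj
      have hj' : (j : ℕ) < (Fin.natAdd n i : ℕ) := hj
      simp only [Fin.coe_natAdd] at hj'
      show (M (Fin.natAdd n i) j).coeff (r (Fin.natAdd n i) - (j : ℕ)) = 0
      rw [Mright, rright]
      by_cases hij : (i : ℕ) ≤ (j : ℕ)
      · rw [if_pos hij]
        obtain ⟨c, hc⟩ := hg ((j : ℕ) - (i : ℕ))
        rw [hc, Polynomial.coeff_C, if_neg (by omega)]
      · rw [if_neg hij]
        simp
  rw [Matrix.det_of_upperTriangular htri]
  refine Finset.prod_eq_one ?_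
  refine Fin.addCases (motive := fun i => i ∈ Finset.univ → Nc i i = 1) ?_ ?_
  · intro i _
    show (M (Fin.castAdd m i) (Fin.castAdd m i)).coeff
      (r (Fin.castAdd m i) - ((Fin.castAdd m i : Fin (n + m)) : ℕ)) = 1
    rw [Mleft, rleft]
    simp only [Fin.coe_castAdd]
    rw [if_pos le_rfl]
    simp only [Nat.sub_self, Nat.add_sub_cancel]
    have h := hftop 0 (Nat.zero_le m)
    rw [Nat.sub_zero] at h
    rw [h, Nat.choose_zero_right, Nat.cast_one]
  · intro i _
    show (M (Fin.natAdd n i) (Fin.natAdd n i)).coeff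
      (r (Fin.natAdd n i) - ((Fin.natAdd n i : Fin (n + m)) : ℕ)) = 1
    rw [Mright, rright]
    simp only [Fin.coe_natAdd]
    rw [if_pos (by omega)]
    rw [show n + (i : ℕ) - (i : ℕ) = n by omega, Nat.sub_self, hgn,
      Polynomial.coeff_one_zero]

lemma coeff_resultant (P Q : Polynomial B) (hP : P.Monic) (hQ : Q.Monic) :
    (Polynomial.sylvesterResultant ((P.map Polynomial.C).comp (Polynomial.X + Polynomial.C Polynomial.X))
      (Q.map Polynomial.C)).coeff (Q.natDegree * P.natDegree) = 1 := by
  nontriviality B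
  set m := P.natDegree with hm
  set n := Q.natDegree with hn
  set f : Polynomial (Polynomial B) := (P.map Polynomial.C).comp
    (Polynomial.X + Polynomial.C Polynomial.X) with hf
  set g : Polynomial (Polynomial B) := Q.map Polynomial.C with hgdef
  have hfc : ∀ k, f.coeff k = Polynomial.hasseDeriv k P := by
    intro k
    have h1 : f = Polynomial.taylor Polynomial.X (P.map Polynomial.C) := by
      rw [Polynomial.taylor_apply]
    have h2 : Polynomial.hasseDeriv k (P.map Polynomial.C)
        = (Polynomial.hasseDeriv k P).map Polynomial.C := by
      ext i
      simp [Polynomial.hasseDeriv_coeff, Polynomial.coeff_map]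
    rw [h1, Polynomial.taylor_coeff, h2, Polynomial.eval_map, Polynomial.eval₂_C_X]
  have hf0 : ∀ k, m < k → f.coeff k = 0 := by
    intro k hk
    rw [hfc]
    exact Polynomial.hasseDeriv_eq_zero_of_lt_natDegree P k hk
  have hfdeg : ∀ k, (f.coeff k).natDegree ≤ m - k := by
    intro k
    rw [hfc]
    exact Polynomial.natDegree_hasseDeriv_le P k
  have hftop : ∀ k, k ≤ m → (f.coeff k).coeff (m - k) = (m.choose k : B) := by
    intro k hk
    rw [hfc, Polynomial.hasseDeriv_coeff, Nat.sub_add_cancel hk, hP.coeff_natDegree, mul_one]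
  have hgc : ∀ j, ∃ c : B, g.coeff j = Polynomial.C c := by
    intro j
    exact ⟨Q.coeff j, by rw [hgdef, Polynomial.coeff_map]⟩
  have hg0 : ∀ j, n < j → g.coeff j = 0 := by
    intro j hj
    rw [hgdef, Polynomial.coeff_map, Polynomial.coeff_eq_zero_of_natDegree_lt hj, map_zero]
  have hgn : g.coeff n = 1 := by
    rw [hgdef, Polynomial.coeff_map, hQ.coeff_natDegree, Polynomial.C_1]
  have hfmonic : f.Monic := (hP.map Polynomial.C).comp_X_add_C _
  have hfd : f.natDegree = m := by
    rw [hf, Polynomial.natDegree_comp_eq_of_mul_ne_zero, hP.natDegree_map,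
      Polynomial.natDegree_X_add_C, mul_one]
    rw [(hP.map Polynomial.C).leadingCoeff, (Polynomial.monic_X_add_C _).leadingCoeff]
    simp
  have hgd : g.natDegree = n := hQ.natDegree_map _
  rw [Polynomial.sylvesterResultant, hfd, hgd]
  exact sylvester_coeff f g m n hf0 hfdeg hftop hgc hg0 hgn

end ResultantAux

/-- Let `P, Q ∈ A[T]` be monic, let `R(X) ∈ A[X]` be the resultant in `T` of `P(T+X)` and
`Q(T)`, and let `A' = A[X]_{R(X)}`.  Then `A → A'` is faithfully flat. -/
theorem faithfullyFlat_localization_away_resultant (P Q : Polynomial A)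
    (hP : P.Monic) (hQ : Q.Monic) :
    Module.FaithfullyFlat A
      (Localization.Away
        (Polynomial.sylvesterResultant
          ((P.map Polynomial.C).comp (Polynomial.X + Polynomial.C Polynomial.X))
          (Q.map Polynomial.C))) := by
  set R : Polynomial A := Polynomial.sylvesterResultant
    ((P.map Polynomial.C).comp (Polynomial.X + Polynomial.C Polynomial.X))
    (Q.map Polynomial.C) with hR
  have hRcoeff : R.coeff (Q.natDegree * P.natDegree) = 1 :=
    ResultantAux.coeff_resultant P Q hP hQ
  haveI flat : Module.Flat A (Localization.Away R) :=
    haveI : Module.Free A (Polynomial A) := Module.Free.of_basis (Polynomial.basisMonomials A)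
    Module.Flat.trans A (Polynomial A) (Localization.Away R)
  refine ⟨?_⟩
  intro m hm htop
  haveI : m.IsPrime := hm.isPrime
  set π : A →+* A ⧸ m := Ideal.Quotient.mk m with hπ
  set π' : Polynomial A →+* Polynomial (A ⧸ m) := Polynomial.mapRingHom π with hπ'
  set Rb : Polynomial (A ⧸ m) := π' R with hRb
  have hRbne : Rb ≠ 0 := by
    intro h
    have h2 : Rb.coeff (Q.natDegree * P.natDegree) = 1 := by
      rw [hRb, hπ', Polynomial.coe_mapRingHom, Polynomial.coeff_map, hRcoeff, map_one]
    rw [h, Polynomial.coeff_zero] at h2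
    exact zero_ne_one h2
  set L := Localization.Away Rb with hL
  haveI : Nontrivial L := by
    have hinj : Function.Injective (algebraMap (Polynomial (A ⧸ m)) L) :=
      IsLocalization.injective L (powers_le_nonZeroDivisors_of_noZeroDivisors hRbne)
    exact ⟨algebraMap _ L 0, algebraMap _ L 1, fun h => zero_ne_one (hinj h)⟩
  set φ : Localization.Away R →+* L := Localization.awayMap π' R with hφ
  set ψ : A →+* L := φ.comp (algebraMap A (Localization.Away R)) with hψ
  have hψ0 : ∀ a ∈ m, ψ a = 0 := by
    intro a ha
    rw [hψ, RingHom.comp_apply,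
      IsScalarTower.algebraMap_apply A (Polynomial A) (Localization.Away R),
      Polynomial.algebraMap_eq, hφ]
    show IsLocalization.Away.map _ _ π' R (algebraMap (Polynomial A) (Localization.Away R)
      (Polynomial.C a)) = 0
    rw [IsLocalization.Away.map, IsLocalization.map_eq]
    have : π' (Polynomial.C a) = 0 := by
      rw [hπ', Polynomial.coe_mapRingHom, Polynomial.map_C,
        Ideal.Quotient.eq_zero_iff_mem.mpr ha, map_zero]
    rw [this, map_zero]
  have h1 : Ideal.map (algebraMap A (Localization.Away R)) m = ⊤ := by
    rw [Ideal.eq_top_iff_one]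
    have : (1 : Localization.Away R) ∈ m • (⊤ : Submodule A (Localization.Away R)) := by
      rw [htop]; trivial
    rwa [Ideal.smul_top_eq_map, Submodule.restrictScalars_mem] at this
  have h2 : Ideal.map ψ m = ⊤ := by
    rw [hψ, ← Ideal.map_map, h1, Ideal.map_top]
  have h3 : Ideal.map ψ m ≤ ⊥ := by
    rw [Ideal.map_le_iff_le_comap]
    intro a ha
    simp only [Ideal.mem_comap, Ideal.mem_bot]
    exact hψ0 a ha
  rw [h2] at h3
  exact one_ne_zero (Ideal.mem_bot.mp (h3 Submodule.mem_top))
end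

section
/- Let A → B be a finite morphism of commutative rings (B finitely generated as an A-module), and suppose there exists a commutative A-algebra E such that E ⊗_A B is a simple E-algebra. Then there exists an A-subalgebra F ⊆ E of finite type (finitely generated as an A-algebra) such that F ⊗_A B is a simple F-algebra. -/
set_option synthInstance.maxHeartbeats 400000
set_option maxHeartbeats 1000000

open TensorProduct

universe u

section Aux

variable {A B E : Type u} [CommRing A] [CommRing B] [Algebra A B] [CommRing E] [Algebra A E]

lemma aux_span {ι : Type u} [Fintype ι] {b : ι → B} (R : Type u) [CommRing R] [Algebra A R]
    (hb : Submodule.span A (Set.range b) = ⊤) :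
    Submodule.span R (Set.range fun i => (1 : R) ⊗ₜ[A] b i) = ⊤ := by
  rw [eq_top_iff]
  rintro z -
  induction z using TensorProduct.induction_on with
  | zero => exact zero_mem _
  | tmul r c =>
    have hc : c ∈ Submodule.span A (Set.range b) := hb ▸ Submodule.mem_top
    obtain ⟨g, hg⟩ := (Submodule.mem_span_range_iff_exists_fun A).mp hc
    rw [← hg, tmul_sum]
    refine Submodule.sum_mem _ fun i _ => ?_
    have : r ⊗ₜ[A] (g i • b i) = (g i • r) • ((1 : R) ⊗ₜ[A] b i) := by
      rw [tmul_smul, smul_tmul', smul_tmul', smul_eq_mul, mul_one]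
    rw [this]
    exact Submodule.smul_mem _ _ (Submodule.subset_span ⟨i, rfl⟩)
  | add u v hu hv => exact Submodule.add_mem _ hu hv

lemma aux_map_smul {R S : Type u} [CommRing R] [CommRing S] [Algebra A R] [Algebra A S]
    (g : R →ₐ[A] S) (r : R) (t : R ⊗[A] B) :
    Algebra.TensorProduct.map g (AlgHom.id A B) (r • t) =
      g r • Algebra.TensorProduct.map g (AlgHom.id A B) t := by
  rw [Algebra.smul_def, map_mul, Algebra.smul_def]
  rw [Algebra.TensorProduct.algebraMap_apply, Algebra.TensorProduct.map_tmul,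
    map_one, Algebra.TensorProduct.algebraMap_apply]
  simp

lemma aux_zero {ι : Type u} [Fintype ι] (b : ι → B)
    (hb : Submodule.span A (Set.range b) = ⊤)
    (F₀ : Subalgebra A E) (f : ι → F₀)
    (hzero : ∑ i, ((f i : E) • ((1 : E) ⊗ₜ[A] b i)) = 0) :
    ∃ Y : Set E, Y.Finite ∧ ∀ (F : Subalgebra A E) (hle : F₀ ≤ F), Y ⊆ F →
      ∑ i, ((Subalgebra.inclusion hle (f i) : F) • ((1 : F) ⊗ₜ[A] b i)) = 0 := by
  have h1 : ∑ i, (b i ⊗ₜ[A] (f i : E)) = (0 : B ⊗[A] E) := by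
    have := congrArg (TensorProduct.comm A E B) hzero
    rw [map_sum, map_zero] at this
    rw [← this]
    refine Finset.sum_congr rfl fun i _ => ?_
    rw [smul_tmul', smul_eq_mul, mul_one, TensorProduct.comm_tmul]
  obtain ⟨κ, a, y, h₂, h₃⟩ := TensorProduct.vanishesTrivially_of_sum_tmul_eq_zero A hb h1
  refine ⟨Set.range y, Set.finite_range y, fun F hle hY => ?_⟩
  have hy : ∀ j, y j ∈ F := fun j => hY ⟨j, rfl⟩
  have hf : ∀ i, Subalgebra.inclusion hle (f i) = ∑ j, a i j • (⟨y j, hy j⟩ : F) := by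
    intro i
    apply Subtype.ext
    push_cast
    exact h₂ i
  calc ∑ i, ((Subalgebra.inclusion hle (f i) : F) • ((1 : F) ⊗ₜ[A] b i))
      = ∑ i, ∑ j, (⟨y j, hy j⟩ : F) • ((1 : F) ⊗ₜ[A] (a i j • b i)) := by
        refine Finset.sum_congr rfl fun i _ => ?_
        rw [hf i, Finset.sum_smul]
        refine Finset.sum_congr rfl fun j _ => ?_
        rw [smul_assoc, tmul_smul, smul_comm]
    _ = ∑ j, (⟨y j, hy j⟩ : F) • ((1 : F) ⊗ₜ[A] (∑ i, a i j • b i)) := by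
        rw [Finset.sum_comm]
        refine Finset.sum_congr rfl fun j _ => ?_
        rw [tmul_sum, Finset.smul_sum]
    _ = 0 := by
        refine Finset.sum_eq_zero fun j _ => ?_
        rw [h₃ j, tmul_zero, smul_zero]

end Aux

/-- If `B` is a finite `A`-algebra and `E` is an `A`-algebra such that `E ⊗[A] B` is a
simple (monogenic) `E`-algebra, then there is a finitely generated `A`-subalgebra
`F ⊆ E` such that `F ⊗[A] B` is a simple `F`-algebra. -/
theorem exists_fg_subalgebra_tensor_simple {A B E : Type u} [CommRing A] [CommRing B]
    [Algebra A B] [Module.Finite A B] [CommRing E] [Algebra A E]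
    (h : ∃ x : E ⊗[A] B, Algebra.adjoin E {x} = ⊤) :
    ∃ F : Subalgebra A E, F.FG ∧ ∃ x : F ⊗[A] B, Algebra.adjoin F {x} = ⊤ := by
  classical
  obtain ⟨x, hx⟩ := h
  obtain ⟨s, hs⟩ := Module.Finite.fg_top (R := A) (M := B)
  set ι := {y : B // y ∈ s} with hι
  set b : ι → B := fun i => i.1 with hbdef
  have hbspan : Submodule.span A (Set.range b) = ⊤ := by
    have : Set.range b = ↑s := by
      ext t
      simp only [hbdef, Set.mem_range, Finset.coe_sort_coe, Finset.mem_coe]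
      exact ⟨fun ⟨y, hy⟩ => hy ▸ y.2, fun ht => ⟨⟨t, ht⟩, rfl⟩⟩
    rw [this]
    exact hs
  -- write x as E-combination of the 1 ⊗ b i
  have hxmem : x ∈ Submodule.span E (Set.range fun i => (1 : E) ⊗ₜ[A] b i) :=
    (aux_span E hbspan) ▸ Submodule.mem_top
  obtain ⟨e, he⟩ := (Submodule.mem_span_range_iff_exists_fun E).mp hxmem
  -- polynomial expressions for the 1 ⊗ b i
  have hmem : ∀ i : ι, (1 : E) ⊗ₜ[A] b i ∈ (Polynomial.aeval (R := E) x).range := by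
    intro i
    rw [← Algebra.adjoin_singleton_eq_range_aeval, hx]
    trivial
  choose p haeval using hmem
  set N : ℕ := (Finset.univ.sup fun i : ι => (p i).natDegree) + 1 with hN
  set c : ι → ℕ → E := fun i n => (p i).coeff n with hc
  have hpc' : ∀ i, (1 : E) ⊗ₜ[A] b i = ∑ n : Fin N, c i n • x ^ (n : ℕ) := by
    intro i
    rw [Fin.sum_univ_eq_sum_range (fun n => c i n • x ^ n) N, ← haeval i]
    exact Polynomial.aeval_eq_sum_range'
      (Nat.lt_succ_of_le (Finset.le_sup (f := fun i : ι => (p i).natDegree) (Finset.mem_univ i))) x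
  set S : Set E := Set.range e ∪ Set.range (fun q : ι × Fin N => c q.1 q.2) with hS
  have hSfin : S.Finite := (Set.finite_range e).union (Set.finite_range _)
  set F₀ : Subalgebra A E := Algebra.adjoin A S with hF₀
  set e' : ι → F₀ := fun i => ⟨e i, Algebra.subset_adjoin (Or.inl ⟨i, rfl⟩)⟩ with he'
  set c' : ι → Fin N → F₀ :=
    fun i n => ⟨c i n, Algebra.subset_adjoin (Or.inr ⟨(i, n), rfl⟩)⟩ with hc'
  set x₀ : F₀ ⊗[A] B := ∑ i, e' i • ((1 : F₀) ⊗ₜ[A] b i) with hx₀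
  set d : ι → F₀ ⊗[A] B :=
    fun i => (∑ n : Fin N, c' i n • x₀ ^ (n : ℕ)) - (1 : F₀) ⊗ₜ[A] b i with hd
  set φ : F₀ ⊗[A] B →ₐ[A] E ⊗[A] B :=
    Algebra.TensorProduct.map F₀.val (AlgHom.id A B) with hφ
  have hφ1 : ∀ bb : B, φ ((1 : F₀) ⊗ₜ[A] bb) = (1 : E) ⊗ₜ[A] bb := by
    intro bb
    rw [hφ, Algebra.TensorProduct.map_tmul, map_one]
    rfl
  have hφx₀ : φ x₀ = x := by
    rw [hx₀, map_sum, ← he]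
    refine Finset.sum_congr rfl fun i _ => ?_
    rw [aux_map_smul, hφ1]
    rfl
  have hφd : ∀ i, φ (d i) = 0 := by
    intro i
    have h4 : φ (d i) = (∑ n : Fin N, c i n • x ^ (n : ℕ)) - (1 : E) ⊗ₜ[A] b i := by
      rw [hd, map_sub, map_sum, hφ1]
      congr 1
      refine Finset.sum_congr rfl fun n _ => ?_
      rw [aux_map_smul, map_pow, hφx₀]
      rfl
    rw [h4, ← hpc' i, sub_self]
  have hfd : ∀ i, ∃ f : ι → F₀, ∑ j, f j • ((1 : F₀) ⊗ₜ[A] b j) = d i := by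
    intro i
    exact (Submodule.mem_span_range_iff_exists_fun F₀).mp ((aux_span F₀ hbspan) ▸ Submodule.mem_top)
  choose f hf using hfd
  have h0 : ∀ i, ∑ j, ((f i j : E) • ((1 : E) ⊗ₜ[A] b j)) = 0 := by
    intro i
    have h5 := congrArg φ (hf i)
    rw [map_sum, hφd i] at h5
    rw [← h5]
    refine Finset.sum_congr rfl fun j _ => ?_
    rw [aux_map_smul, hφ1]
    rfl
  choose Y hYfin hYprop using fun i => aux_zero b hbspan F₀ (f i) (h0 i)
  set F : Subalgebra A E := Algebra.adjoin A (S ∪ ⋃ i, Y i) with hF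
  have hle : F₀ ≤ F := Algebra.adjoin_mono Set.subset_union_left
  have hYF : ∀ i, Y i ⊆ F := fun i =>
    (Set.subset_iUnion Y i).trans (Set.subset_union_right.trans Algebra.subset_adjoin)
  set ψ : F₀ ⊗[A] B →ₐ[A] F ⊗[A] B :=
    Algebra.TensorProduct.map (Subalgebra.inclusion hle) (AlgHom.id A B) with hψ
  have hψ1 : ∀ bb : B, ψ ((1 : F₀) ⊗ₜ[A] bb) = (1 : F) ⊗ₜ[A] bb := by
    intro bb
    rw [hψ, Algebra.TensorProduct.map_tmul, map_one]
    rfl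
  set x' : F ⊗[A] B := ψ x₀ with hx'
  have hψd0 : ∀ i, ψ (d i) = 0 := by
    intro i
    have h6 := congrArg ψ (hf i)
    rw [map_sum] at h6
    rw [← h6]
    have h7 : ∑ j, ((Subalgebra.inclusion hle (f i j) : F) • ((1 : F) ⊗ₜ[A] b j)) = 0 :=
      hYprop i F hle (hYF i)
    rw [← h7]
    refine Finset.sum_congr rfl fun j _ => ?_
    rw [aux_map_smul, hψ1]
  have hx'b : ∀ i, (1 : F) ⊗ₜ[A] b i =
      ∑ n : Fin N, (Subalgebra.inclusion hle (c' i n) : F) • x' ^ (n : ℕ) := by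
    intro i
    have h8 : ψ (d i) =
        (∑ n : Fin N, (Subalgebra.inclusion hle (c' i n) : F) • x' ^ (n : ℕ)) -
          (1 : F) ⊗ₜ[A] b i := by
      rw [hd, map_sub, map_sum, hψ1]
      congr 1
      refine Finset.sum_congr rfl fun n _ => ?_
      rw [aux_map_smul, map_pow]
    have h9 := hψd0 i
    rw [h8] at h9
    exact (sub_eq_zero.mp h9).symm
  have hmem' : ∀ i, ((1 : F) ⊗ₜ[A] b i) ∈ Algebra.adjoin F {x'} := by
    intro i
    rw [hx'b i]
    refine Subalgebra.sum_mem _ fun n _ => ?_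
    exact Subalgebra.smul_mem _ (pow_mem (Algebra.subset_adjoin (Set.mem_singleton x')) _) _
  refine ⟨F, Subalgebra.fg_def.mpr ⟨_, hSfin.union (Set.finite_iUnion hYfin), rfl⟩, x', ?_⟩
  rw [eq_top_iff]
  rintro z -
  have hz : z ∈ Submodule.span F (Set.range fun i => (1 : F) ⊗ₜ[A] b i) :=
    (aux_span F hbspan) ▸ Submodule.mem_top
  have hsub : Submodule.span F (Set.range fun i => (1 : F) ⊗ₜ[A] b i) ≤
      Subalgebra.toSubmodule (Algebra.adjoin F {x'}) :=
    Submodule.span_le.mpr (by rintro t ⟨i, rfl⟩; exact hmem' i)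
  exact hsub hz
end

section
/- Let A be a commutative ring, n ≥ 1, S = A[T_1, …, T_n] the polynomial ring, and consider the element ξ = (T_1, …, T_n) of the product ring S^n, viewed as an S-algebra via the diagonal. Then the characteristic polynomial of multiplication by ξ on the free S-module S^n equals ∏_{i=1}^n (X − T_i), and the S-algebra morphism S[X]/(∏_{i=1}^n (X − T_i)) → S^n sending X to (T_1, …, T_n) is injective. -/
universe u

open Polynomial Matrix

private lemma sub_X_isRegular {A : Type u} [CommRing A] {n : ℕ} {i j : Fin n} (h : i ≠ j) :
    IsRegular (MvPolynomial.X j - MvPolynomial.X i : MvPolynomial (Fin n) A) := by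
  classical
  set φ : MvPolynomial (Fin n) A →ₐ[A] MvPolynomial (Fin n) A :=
    MvPolynomial.aeval (fun k => if k = j then MvPolynomial.X j + MvPolynomial.X i
      else MvPolynomial.X k) with hφ
  set ψ : MvPolynomial (Fin n) A →ₐ[A] MvPolynomial (Fin n) A :=
    MvPolynomial.aeval (fun k => if k = j then MvPolynomial.X j - MvPolynomial.X i
      else MvPolynomial.X k) with hψ
  have hcomp : ∀ x, ψ (φ x) = x := by
    intro x
    have : ψ.comp φ = AlgHom.id A _ := by
      apply MvPolynomial.algHom_ext
      intro k
      by_cases hk : k = j <;> simp [hφ, hψ, hk, h, Ne.symm h]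
    simpa using DFunLike.congr_fun this x
  have hinj : Function.Injective φ := Function.LeftInverse.injective hcomp
  have hφd : φ (MvPolynomial.X j - MvPolynomial.X i) = MvPolynomial.X j := by
    simp [hφ, h, Ne.symm h]
  have key : ∀ b c : MvPolynomial (Fin n) A,
      (MvPolynomial.X j - MvPolynomial.X i) * b = (MvPolynomial.X j - MvPolynomial.X i) * c →
      b = c := by
    intro b c hbc
    apply hinj
    have := congrArg φ hbc
    rw [_root_.map_mul, _root_.map_mul, hφd] at this
    exact MvPolynomial.isRegular_X.left this
  exact ⟨fun b c hbc => key b c hbc, fun b c hbc => key b c (by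
    simpa only [mul_comm] using hbc)⟩

/-- For `S = A[T_1, …, T_n]` and the element `ξ = (T_1, …, T_n)` of the diagonal
`S`-algebra `S^n`, the characteristic polynomial of multiplication by `ξ` on the free
`S`-module `S^n` is `∏ i, (X - T_i)`, and the `S`-algebra morphism
`S[X]/(∏ i (X - T_i)) → S^n`, `X ↦ (T_1, …, T_n)`, is well defined and injective:
the kernel of evaluation at `ξ` is exactly the ideal generated by `∏ i, (X - T_i)`. -/
theorem charpoly_generic_diagonal_and_kronecker_injective {A : Type u} [CommRing A]
    (n : ℕ) (hn : 1 ≤ n) :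
    (LinearMap.mulLeft (MvPolynomial (Fin n) A)
        (fun i => MvPolynomial.X i : Fin n → MvPolynomial (Fin n) A)).charpoly =
      ∏ i : Fin n, (Polynomial.X - Polynomial.C (MvPolynomial.X i)) ∧
    RingHom.ker
        (Polynomial.aeval (fun i => MvPolynomial.X i : Fin n → MvPolynomial (Fin n) A) :
          Polynomial (MvPolynomial (Fin n) A) →ₐ[MvPolynomial (Fin n) A]
            (Fin n → MvPolynomial (Fin n) A)) =
      Ideal.span {∏ i : Fin n, (Polynomial.X - Polynomial.C (MvPolynomial.X i))} := by
  classical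
  rcases subsingleton_or_nontrivial A with hA | hA
  · constructor
    · exact Subsingleton.elim _ _
    · exact Subsingleton.elim _ _
  set S := MvPolynomial (Fin n) A with hS
  set ξ : Fin n → S := fun i => MvPolynomial.X i with hξ
  set f : Polynomial S := ∏ i : Fin n, (X - C (MvPolynomial.X i)) with hf
  have hfmonic : f.Monic := monic_prod_of_monic _ _ fun i _ => monic_X_sub_C _
  have hfdeg : f.natDegree = n := by
    rw [hf, Polynomial.natDegree_prod_of_monic _ _ fun i _ => monic_X_sub_C _]
    simp
  constructor
  · -- charpoly part
    have hM : LinearMap.toMatrix (Pi.basisFun S (Fin n)) (Pi.basisFun S (Fin n))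
        (LinearMap.mulLeft S ξ) = Matrix.diagonal ξ := by
      ext i j
      rw [LinearMap.toMatrix_apply]
      simp only [LinearMap.mulLeft_apply, Pi.basisFun_apply, Pi.basisFun_repr, Pi.mul_apply]
      rw [Matrix.diagonal]
      by_cases hij : i = j
      · subst hij; simp
      · simp [Pi.single_apply, Ne.symm hij, hij]
    rw [← LinearMap.charpoly_toMatrix _ (Pi.basisFun S (Fin n)), hM]
    have hcm : charmatrix (Matrix.diagonal ξ) =
        Matrix.diagonal (fun i => (X : Polynomial S) - C (ξ i)) := by
      ext i j
      by_cases hij : i = j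
      · subst hij; simp
      · simp [charmatrix_apply_ne _ _ _ hij, Matrix.diagonal_apply_ne _ hij]
    rw [Matrix.charpoly, hcm, Matrix.det_diagonal]
  · -- kernel part
    have hf_eval : ∀ (p : Polynomial S) (i : Fin n),
        (Polynomial.aeval ξ p : Fin n → S) i = Polynomial.eval (MvPolynomial.X i) p := by
      intro p i
      have hhom : (Pi.evalAlgHom S (fun _ => S) i).comp (Polynomial.aeval ξ) =
          Polynomial.aeval (MvPolynomial.X i) := by
        apply Polynomial.algHom_ext
        simp [hξ]
      have : (Polynomial.aeval ξ p : Fin n → S) i =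
          ((Pi.evalAlgHom S (fun _ => S) i).comp (Polynomial.aeval ξ)) p := rfl
      rw [this, hhom, Polynomial.aeval_def, ← Polynomial.eval_map]
      simp
    have hfmem : Polynomial.aeval ξ f = 0 := by
      funext i
      rw [hf_eval, hf, Polynomial.eval_prod]
      exact Finset.prod_eq_zero (Finset.mem_univ i) (by simp)
    ext p
    rw [RingHom.mem_ker, Ideal.mem_span_singleton]
    constructor
    · intro hp
      set r := p %ₘ f with hr
      have hrp : r = p - f * (p /ₘ f) := by
        rw [hr, eq_sub_iff_add_eq, Polynomial.modByMonic_add_div p f]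
      have hrev : ∀ i : Fin n, Polynomial.eval (MvPolynomial.X i) r = 0 := by
        intro i
        rw [← hf_eval]
        rw [hrp, map_sub, _root_.map_mul, hfmem, hp]
        simp
      have hr0 : r = 0 := by
        by_cases hrz : r = 0
        · exact hrz
        have hdeg : r.natDegree < n := by
          have h1 := Polynomial.degree_modByMonic_lt p hfmonic
          rw [← hr, Polynomial.degree_eq_natDegree hfmonic.ne_zero, hfdeg] at h1
          exact (Polynomial.natDegree_lt_iff_degree_lt hrz).mpr h1
        set c : Fin n → S := fun j => r.coeff j with hc
        have hmv : (vandermonde ξ).mulVec c = 0 := by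
          funext i
          have := hrev i
          rw [Polynomial.eval_eq_sum_range' hdeg] at this
          rw [← Fin.sum_univ_eq_sum_range (fun j => r.coeff j * (MvPolynomial.X i) ^ j) n] at this
          simpa [Matrix.mulVec, dotProduct, vandermonde, hc, mul_comm] using this
        have hdet : IsRegular (vandermonde ξ).det := by
          rw [Matrix.det_vandermonde]
          exact IsRegular.prod fun i _ => IsRegular.prod fun j hj =>
            sub_X_isRegular (Finset.mem_Ioi.mp hj).ne
        have hc0 : ∀ j, (vandermonde ξ).det * c j = 0 := by
          intro j
          have h2 := congrArg (fun w => ((vandermonde ξ).adjugate.mulVec w) j) hmv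
          rw [Matrix.mulVec_mulVec, Matrix.adjugate_mul] at h2
          simpa [Matrix.mulVec_mulVec, Matrix.adjugate_mul, Matrix.smul_mulVec,
            Matrix.one_mulVec, smul_eq_mul] using h2
        have hc0' : ∀ j, c j = 0 := fun j => hdet.left (by simpa using hc0 j)
        apply Polynomial.ext
        intro k
        by_cases hk : k < n
        · simpa [hc] using hc0' ⟨k, hk⟩
        · simp [Polynomial.coeff_eq_zero_of_natDegree_lt (lt_of_lt_of_le hdeg (le_of_not_gt hk))]
      exact (Polynomial.modByMonic_eq_zero_iff_dvd hfmonic).mp hr0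
    · rintro ⟨q, rfl⟩
      rw [_root_.map_mul, hfmem, zero_mul]
end

section
/- Let K → L be a finite field extension generated by a single element (L = K(x) for some x ∈ L), and let (e_1, …, e_n) be a K-basis of L. Then the polynomial F(T_1, …, T_n) = N_{K[T_1,…,T_n] ⊗_K L / K[T_1,…,T_n]}(T_1 ⊗ e_1 + ⋯ + T_n ⊗ e_n), i.e. the norm of the generic element T_1 e_1 + ⋯ + T_n e_n, is an irreducible element of the polynomial ring K[T_1, …, T_n]. -/
open TensorProduct

universe u

namespace IrredNormAux

open Polynomial

variable {K : Type u} [Field K] {n : ℕ}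

/-- The grading homomorphism `X i ↦ C (X i) * S`. -/
noncomputable def theta (K : Type u) [Field K] (n : ℕ) :
    MvPolynomial (Fin n) K →ₐ[K] Polynomial (MvPolynomial (Fin n) K) :=
  MvPolynomial.aeval fun i => Polynomial.C (MvPolynomial.X i) * Polynomial.X

lemma theta_X (i : Fin n) :
    theta K n (MvPolynomial.X i) = Polynomial.C (MvPolynomial.X i) * Polynomial.X :=
  MvPolynomial.aeval_X _ i

lemma theta_C (a : K) :
    theta K n (MvPolynomial.C a) = Polynomial.C (MvPolynomial.C a) := by
  rw [theta, MvPolynomial.aeval_C, Polynomial.algebraMap_apply, MvPolynomial.algebraMap_eq]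

lemma theta_monomial (u : Fin n →₀ ℕ) (a : K) :
    theta K n (MvPolynomial.monomial u a) =
      Polynomial.C (MvPolynomial.monomial u a) * Polynomial.X ^ u.degree := by
  rw [theta, MvPolynomial.aeval_monomial]
  have h1 : (u.prod fun i k => (Polynomial.C (MvPolynomial.X (R := K) i) * Polynomial.X) ^ k)
      = Polynomial.C (u.prod fun i k => (MvPolynomial.X i : MvPolynomial (Fin n) K) ^ k) *
        Polynomial.X ^ u.degree := by
    rw [Finsupp.prod, Finsupp.prod, Finsupp.degree_apply, map_prod, ← Finset.prod_pow_eq_pow_sum,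
      ← Finset.prod_mul_distrib]
    exact Finset.prod_congr rfl fun i _ => by rw [mul_pow, map_pow]
  rw [h1, MvPolynomial.monomial_eq, map_mul, Polynomial.algebraMap_apply,
    MvPolynomial.algebraMap_eq]
  ring

lemma theta_coeff (p : MvPolynomial (Fin n) K) (j : ℕ) :
    (theta K n p).coeff j = MvPolynomial.homogeneousComponent j p := by
  induction p using MvPolynomial.induction_on' with
  | monomial u a =>
      have hr : MvPolynomial.homogeneousComponent j (MvPolynomial.monomial u a) =
          if j = u.degree then MvPolynomial.monomial u a else 0 :=
        MvPolynomial.homogeneousComponent_of_mem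
          ((MvPolynomial.mem_homogeneousSubmodule _ _).mpr
            (MvPolynomial.isHomogeneous_monomial a rfl))
      rw [theta_monomial, Polynomial.coeff_C_mul, Polynomial.coeff_X_pow, hr]
      by_cases h : j = u.degree <;> simp [h]
  | add p q hp hq => rw [map_add, Polynomial.coeff_add, hp, hq, map_add]

lemma eval_one_theta (p : MvPolynomial (Fin n) K) :
    Polynomial.eval (1 : MvPolynomial (Fin n) K) (theta K n p) = p := by
  induction p using MvPolynomial.induction_on' with
  | monomial u a => rw [theta_monomial]; simp
  | add p q hp hq => rw [map_add, Polynomial.eval_add, hp, hq]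

lemma isHomogeneous_of_theta_coeff {p : MvPolynomial (Fin n) K} {a : ℕ}
    (h : ∀ j, j ≠ a → (theta K n p).coeff j = 0) : p.IsHomogeneous a := by
  have hcomp : ∀ j, j ≠ a → MvPolynomial.homogeneousComponent j p = 0 := fun j hj => by
    rw [← theta_coeff]; exact h j hj
  have hp : p = MvPolynomial.homogeneousComponent a p := by
    conv_lhs => rw [← MvPolynomial.sum_homogeneousComponent p]
    refine Finset.sum_eq_single a (fun b _ hb => hcomp b hb) (fun ha => ?_)
    exact MvPolynomial.homogeneousComponent_eq_zero _ _ (by simpa using ha)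
  rw [hp]
  exact MvPolynomial.homogeneousComponent_isHomogeneous a p

lemma eq_C_of_isHomogeneous_zero {p : MvPolynomial (Fin n) K}
    (h : p.IsHomogeneous 0) : p = MvPolynomial.C (MvPolynomial.coeff 0 p) := by
  rw [← MvPolynomial.homogeneousComponent_zero]
  exact (h.weightedHomogeneousComponent_same).symm

lemma natDegree_aeval_le {p : MvPolynomial (Fin n) K} {a : ℕ} (hp : p.IsHomogeneous a)
    (f : Fin n → Polynomial K) (hf : ∀ i, (f i).natDegree ≤ 1) :
    (MvPolynomial.aeval f p).natDegree ≤ a := by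
  conv_lhs => rw [← MvPolynomial.support_sum_monomial_coeff p]
  rw [map_sum]
  refine Polynomial.natDegree_sum_le_of_forall_le _ _ fun d hd => ?_
  rw [MvPolynomial.aeval_monomial]
  refine Polynomial.natDegree_mul_le.trans ?_
  have h0 : (algebraMap K (Polynomial K) (MvPolynomial.coeff d p)).natDegree = 0 := by
    rw [Polynomial.algebraMap_apply]; simp
  rw [h0, zero_add]
  have hdeg : (∑ i ∈ d.support, d i) = a := by
    have := hp (MvPolynomial.mem_support_iff.mp hd)
    simpa [Finsupp.weight_apply, Finsupp.sum] using this
  calc (d.prod fun i k => f i ^ k).natDegree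
      ≤ ∑ i ∈ d.support, (f i ^ d i).natDegree := Polynomial.natDegree_prod_le _ _
    _ ≤ ∑ i ∈ d.support, d i := Finset.sum_le_sum fun i _ =>
        Polynomial.natDegree_pow_le.trans (by
          simpa using Nat.mul_le_mul_left (d i) (hf i))
    _ = a := hdeg

end IrredNormAux

open IrredNormAux

/-- Let `L/K` be a finite simple field extension (`L = K(x)`), and let `(e_1, …, e_n)` be
a `K`-basis of `L`.  Then the norm of the generic element,
`F(T_1, …, T_n) = N_{K[T_1,…,T_n] ⊗[K] L / K[T_1,…,T_n]}(Σ_i T_i ⊗ e_i)`,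
is an irreducible element of `K[T_1, …, T_n]`. -/
theorem irreducible_norm_genericElement {K L : Type u} [Field K] [Field L] [Algebra K L]
    [FiniteDimensional K L] (x : L) (hx : IntermediateField.adjoin K {x} = ⊤)
    {n : ℕ} (e : Module.Basis (Fin n) K L) :
    Irreducible (Algebra.norm (MvPolynomial (Fin n) K)
      (∑ i, MvPolynomial.X i ⊗ₜ[K] e i : MvPolynomial (Fin n) K ⊗[K] L)) := by
  classical
  set A := MvPolynomial (Fin n) K with hA
  let b : Module.Basis (Fin n) A (A ⊗[K] L) := e.baseChange A
  let D : Matrix (Fin n) (Fin n) A :=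
    Matrix.of fun j k => ∑ i, MvPolynomial.X i * MvPolynomial.C (Algebra.leftMulMatrix e (e i) j k)
  -- Step 1 : the norm is the determinant of `D`
  have hlmm : Algebra.leftMulMatrix b (∑ i, MvPolynomial.X i ⊗ₜ[K] e i) = D := by
    refine Matrix.ext fun j k => ?_
    rw [Algebra.leftMulMatrix_eq_repr_mul]
    have hw : (∑ i, MvPolynomial.X i ⊗ₜ[K] e i) * b k
        = ∑ i, (MvPolynomial.X i : A) ⊗ₜ[K] (e i * e k) := by
      rw [show b k = (1 : A) ⊗ₜ[K] e k from Module.Basis.baseChange_apply .., Finset.sum_mul]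
      exact Finset.sum_congr rfl fun i _ => by
        rw [Algebra.TensorProduct.tmul_mul_tmul, mul_one]
    rw [hw, map_sum, Finset.sum_apply']
    simp only [Module.Basis.baseChange_repr_tmul, b]
    simp only [Algebra.smul_def, MvPolynomial.algebraMap_eq, D, Matrix.of_apply,
      Algebra.leftMulMatrix_eq_repr_mul]
    exact Finset.sum_congr rfl fun i _ => by exact mul_comm _ _
  have hF : Algebra.norm A (∑ i, MvPolynomial.X i ⊗ₜ[K] e i : A ⊗[K] L) = D.det := by
    rw [Algebra.norm_eq_matrix_det b, hlmm]
  rw [hF]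
  -- Step 2 : `theta` of the determinant
  have hθD : ∀ j k, theta K n (D j k) = Polynomial.X * Polynomial.C (D j k) := by
    intro j k
    simp only [D, Matrix.of_apply, map_sum, map_mul, theta_X, theta_C, Finset.mul_sum]
    exact Finset.sum_congr rfl fun i _ => by ring
  have hθF : theta K n D.det = Polynomial.X ^ n * Polynomial.C D.det := by
    have h1 : theta K n D.det = (D.map (theta K n)).det := by
      rw [show (theta K n D.det : Polynomial A) = (theta K n).toRingHom D.det from rfl,
        RingHom.map_det]
      rfl
    have h2 : D.map (theta K n) = (Polynomial.X : Polynomial A) • D.map Polynomial.C := by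
      ext j k
      simp [Matrix.map_apply, hθD j k, Matrix.smul_apply, smul_eq_mul]
    have h3 : (Polynomial.C D.det : Polynomial A) = (D.map Polynomial.C).det := by
      rw [RingHom.map_det, RingHom.mapMatrix_apply]
    rw [h1, h2, Matrix.det_smul, Fintype.card_fin, h3]
  -- Step 3 : the substitution onto the line through 1 and x
  let c : Fin n → K := fun i => e.repr 1 i
  let d : Fin n → K := fun i => e.repr x i
  let fφ : Fin n → Polynomial K := fun i => Polynomial.C (c i) * Polynomial.X - Polynomial.C (d i)
  let φ : A →ₐ[K] Polynomial K := MvPolynomial.aeval fφ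
  have hfφdeg : ∀ i, (fφ i).natDegree ≤ 1 := fun i => by
    refine (Polynomial.natDegree_sub_le _ _).trans ?_
    simp [fφ, Polynomial.natDegree_C_mul_le]
    exact Polynomial.natDegree_C_mul_le _ _ |>.trans (by simp)
  have hMsum1 : ∑ i, c i • Algebra.leftMulMatrix e (e i) = 1 := by
    have : ∑ i, c i • Algebra.leftMulMatrix e (e i)
        = Algebra.leftMulMatrix e (∑ i, c i • e i) := by
      rw [map_sum]
      exact Finset.sum_congr rfl fun i _ => (map_smul (Algebra.leftMulMatrix e) _ _).symm
    rw [this, Module.Basis.sum_repr e 1, map_one]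
  have hMsumx : ∑ i, d i • Algebra.leftMulMatrix e (e i) = Algebra.leftMulMatrix e x := by
    have : ∑ i, d i • Algebra.leftMulMatrix e (e i)
        = Algebra.leftMulMatrix e (∑ i, d i • e i) := by
      rw [map_sum]
      exact Finset.sum_congr rfl fun i _ => (map_smul (Algebra.leftMulMatrix e) _ _).symm
    rw [this, Module.Basis.sum_repr e x]
  have hφD : D.map φ = Matrix.charmatrix (Algebra.leftMulMatrix e x) := by
    refine Matrix.ext fun j k => ?_
    have step1 : (D.map φ) j k = ∑ i,
        (Polynomial.C (c i) * Polynomial.X - Polynomial.C (d i)) *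
          Polynomial.C (Algebra.leftMulMatrix e (e i) j k) := by
      simp only [Matrix.map_apply, D, Matrix.of_apply, map_sum, map_mul]
      refine Finset.sum_congr rfl fun i _ => ?_
      have hXi : φ (MvPolynomial.X i) = Polynomial.C (c i) * Polynomial.X - Polynomial.C (d i) :=
        MvPolynomial.aeval_X _ i
      have hCm : φ (MvPolynomial.C (Algebra.leftMulMatrix e (e i) j k)) =
          Polynomial.C (Algebra.leftMulMatrix e (e i) j k) := by
        rw [show φ (MvPolynomial.C (Algebra.leftMulMatrix e (e i) j k)) =
          algebraMap K (Polynomial K) (Algebra.leftMulMatrix e (e i) j k) from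
            MvPolynomial.aeval_C _ _, Polynomial.algebraMap_apply]
        simp
      rw [hXi, hCm]
    have step2 : ∑ i, (Polynomial.C (c i) * Polynomial.X - Polynomial.C (d i)) *
          Polynomial.C (Algebra.leftMulMatrix e (e i) j k)
        = Polynomial.X * Polynomial.C (∑ i, c i * Algebra.leftMulMatrix e (e i) j k)
          - Polynomial.C (∑ i, d i * Algebra.leftMulMatrix e (e i) j k) := by
      rw [map_sum, map_sum, Finset.mul_sum, ← Finset.sum_sub_distrib]
      refine Finset.sum_congr rfl fun i _ => ?_
      rw [map_mul, map_mul]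
      ring
    have h1 : ∑ i, c i * Algebra.leftMulMatrix e (e i) j k
        = (1 : Matrix (Fin n) (Fin n) K) j k := by
      rw [← hMsum1]; simp [Matrix.sum_apply, Matrix.smul_apply, smul_eq_mul]
    have h2 : ∑ i, d i * Algebra.leftMulMatrix e (e i) j k
        = Algebra.leftMulMatrix e x j k := by
      rw [← hMsumx]; simp [Matrix.sum_apply, Matrix.smul_apply, smul_eq_mul]
    rw [step1, step2, h1, h2, Matrix.charmatrix_apply]
    by_cases hjk : j = k <;>
      simp [hjk, Matrix.one_apply, Matrix.diagonal_apply]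
  have hφF : φ D.det = (Algebra.leftMulMatrix e x).charpoly := by
    rw [show (φ D.det : Polynomial K) = φ.toRingHom D.det from rfl, RingHom.map_det]
    show (D.map ⇑φ).det = (Algebra.leftMulMatrix e x).charpoly
    rw [hφD]
    rfl
  -- Step 4 : the charpoly is the minimal polynomial of x, hence irreducible
  have hxint : IsIntegral K x := IsIntegral.of_finite K x
  have hcharpoly : (Algebra.leftMulMatrix e x).charpoly = minpoly K x := by
    let pb0 := IntermediateField.adjoin.powerBasis hxint
    let eqv : (IntermediateField.adjoin K {x}) ≃ₐ[K] L :=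
      (IntermediateField.equivOfEq hx).trans IntermediateField.topEquiv
    let pb := pb0.map eqv
    have hpbgen : pb.gen = x := by
      simp [pb, pb0, PowerBasis.map_gen, IntermediateField.adjoin.powerBasis_gen, eqv]
    rw [Algebra.leftMulMatrix_apply, LinearMap.charpoly_toMatrix]
    conv_rhs => rw [← hpbgen]
    rw [← charpoly_leftMulMatrix pb, hpbgen, Algebra.leftMulMatrix_apply,
      LinearMap.charpoly_toMatrix]
  have h_irr : Irreducible (φ D.det) := by
    rw [hφF, hcharpoly]; exact minpoly.irreducible hxint
  have hdegφF : (φ D.det).natDegree = n := by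
    rw [hφF, Matrix.charpoly_natDegree_eq_dim, Fintype.card_fin]
  have hFne : D.det ≠ 0 := fun h0 => h_irr.ne_zero (by rw [h0, map_zero])
  -- Step 5 : endgame
  constructor
  · exact fun hunit => h_irr.not_isUnit (hunit.map φ)
  · intro G H hGH
    have hG0 : G ≠ 0 := fun h => hFne (by rw [hGH, h, zero_mul])
    have hH0 : H ≠ 0 := fun h => hFne (by rw [hGH, h, mul_zero])
    have hθmul : theta K n G * theta K n H = Polynomial.X ^ n * Polynomial.C D.det := by
      rw [← map_mul, ← hGH, hθF]
    have hRHSne : (Polynomial.X ^ n * Polynomial.C D.det : Polynomial A) ≠ 0 :=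
      mul_ne_zero (pow_ne_zero _ Polynomial.X_ne_zero) (Polynomial.C_ne_zero.mpr hFne)
    have hθG0 : theta K n G ≠ 0 := fun h => hRHSne (by rw [← hθmul, h, zero_mul])
    have hθH0 : theta K n H ≠ 0 := fun h => hRHSne (by rw [← hθmul, h, mul_zero])
    have hdadd : (theta K n G).natDegree + (theta K n H).natDegree = n := by
      rw [← Polynomial.natDegree_mul hθG0 hθH0, hθmul, mul_comm,
        Polynomial.natDegree_C_mul_X_pow _ _ hFne]
    have htadd : (theta K n G).natTrailingDegree + (theta K n H).natTrailingDegree = n := by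
      rw [← Polynomial.natTrailingDegree_mul hθG0 hθH0, hθmul, mul_comm,
        Polynomial.natTrailingDegree_mul_X_pow (Polynomial.C_ne_zero.mpr hFne),
        Polynomial.natTrailingDegree_C, zero_add]
    have htG : (theta K n G).natTrailingDegree = (theta K n G).natDegree := by
      have h1 := Polynomial.natTrailingDegree_le_natDegree (theta K n G)
      have h2 := Polynomial.natTrailingDegree_le_natDegree (theta K n H)
      omega
    have htH : (theta K n H).natTrailingDegree = (theta K n H).natDegree := by
      have h1 := Polynomial.natTrailingDegree_le_natDegree (theta K n G)
      have h2 := Polynomial.natTrailingDegree_le_natDegree (theta K n H)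
      omega
    have hGhom : G.IsHomogeneous (theta K n G).natDegree := by
      refine isHomogeneous_of_theta_coeff fun j hj => ?_
      rcases lt_or_gt_of_ne hj with h | h
      · exact Polynomial.coeff_eq_zero_of_lt_natTrailingDegree (by omega)
      · exact Polynomial.coeff_eq_zero_of_natDegree_lt h
    have hHhom : H.IsHomogeneous (theta K n H).natDegree := by
      refine isHomogeneous_of_theta_coeff fun j hj => ?_
      rcases lt_or_gt_of_ne hj with h | h
      · exact Polynomial.coeff_eq_zero_of_lt_natTrailingDegree (by omega)
      · exact Polynomial.coeff_eq_zero_of_natDegree_lt h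
    have hφmul : φ G * φ H = φ D.det := by rw [← map_mul, ← hGH]
    have hφG0 : φ G ≠ 0 := fun h => h_irr.ne_zero (by rw [← hφmul, h, zero_mul])
    have hφH0 : φ H ≠ 0 := fun h => h_irr.ne_zero (by rw [← hφmul, h, mul_zero])
    have hφdadd : (φ G).natDegree + (φ H).natDegree = n := by
      rw [← Polynomial.natDegree_mul hφG0 hφH0, hφmul, hdegφF]
    have hbG : (φ G).natDegree ≤ (theta K n G).natDegree := natDegree_aeval_le hGhom fφ hfφdeg
    have hbH : (φ H).natDegree ≤ (theta K n H).natDegree := natDegree_aeval_le hHhom fφ hfφdeg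
    rcases h_irr.isUnit_or_isUnit hφmul.symm with hu | hu
    · left
      have h0 : (φ G).natDegree = 0 := by
        have := Polynomial.isUnit_iff_degree_eq_zero.mp hu
        exact Polynomial.natDegree_eq_zero_iff_degree_le_zero.mpr (le_of_eq this)
      have hG00 : (theta K n G).natDegree = 0 := by omega
      have hGC : G = MvPolynomial.C (MvPolynomial.coeff 0 G) :=
        eq_C_of_isHomogeneous_zero (hG00 ▸ hGhom)
      have hGne : MvPolynomial.coeff 0 G ≠ 0 := fun hcc => hG0 (by rw [hGC, hcc, map_zero])
      rw [hGC]
      exact (isUnit_iff_ne_zero.mpr hGne).map MvPolynomial.C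
    · right
      have h0 : (φ H).natDegree = 0 := by
        have := Polynomial.isUnit_iff_degree_eq_zero.mp hu
        exact Polynomial.natDegree_eq_zero_iff_degree_le_zero.mpr (le_of_eq this)
      have hH00 : (theta K n H).natDegree = 0 := by omega
      have hHC : H = MvPolynomial.C (MvPolynomial.coeff 0 H) :=
        eq_C_of_isHomogeneous_zero (hH00 ▸ hHhom)
      have hHne : MvPolynomial.coeff 0 H ≠ 0 := fun hcc => hH0 (by rw [hHC, hcc, map_zero])
      rw [hHC]
      exact (isUnit_iff_ne_zero.mpr hHne).map MvPolynomial.C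
end
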